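/- Let (M, d) be a metric space, X a metric space, and {F_K : K ∈ K(M)} a family of compact subsets of X with F_K ⊆ F_L whenever K ⊆ L. For nonempty compact K ⊆ M define A_K = ⋂_{n≥1} ⋃ {F_L : L compact, K ⊆ L ⊆ U_n(K)}, where U_n(K) = {t ∈ M : d(t, K) < 1/n}, and A_∅ = F_∅. Then each A_K is a compact subset of X. -/

import Mathlib

open Metric Filter Set Topology

lemma regularization_aux {M : Type*} [MetricSpace M] {K : Set M} (hK : K.Nonempty)
    (hKc : IsCompact K) (L : ℕ → Set M) (hLc : ∀ j, IsCompact (L j)) (hKL : K ⊆ L 0)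
    (hd : ∀ j, ∀ t ∈ L j, Metric.infDist t K ≤ 1 / (j + 1 : ℝ)) :
    IsCompact (closure (⋃ j, L j)) := by
  apply IsSeqCompact.isCompact
  intro y hy
  have hz : ∀ m : ℕ, ∃ zm, zm ∈ ⋃ j, L j ∧ dist (y m) zm < 1 / (m + 1 : ℝ) :=
    fun m => Metric.mem_closure_iff.1 (hy m) _ (by positivity)
  choose z hzmem hzd using hz
  choose φ hφ using fun m => Set.mem_iUnion.1 (hzmem m)
  have h10 : Tendsto (fun m : ℕ => 1 / (m + 1 : ℝ)) atTop (𝓝 0) :=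
    tendsto_one_div_add_atTop_nhds_zero_nat
  by_cases hb : ∃ j, {m | φ m = j}.Infinite
  · obtain ⟨j, hj⟩ := hb
    set ψ := Nat.nth (fun m => φ m = j) with hψdef
    have hψmono : StrictMono ψ := Nat.nth_strictMono hj
    have hψmem : ∀ k, φ (ψ k) = j := fun k => Nat.nth_mem_of_infinite hj k
    have hmem : ∀ k, z (ψ k) ∈ L j := fun k => (hψmem k) ▸ hφ (ψ k)
    obtain ⟨p, hpL, σ, hσ, hσt⟩ := (hLc j).isSeqCompact hmem
    refine ⟨p, subset_closure (Set.mem_iUnion.2 ⟨j, hpL⟩), ψ ∘ σ, hψmono.comp hσ, ?_⟩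
    rw [tendsto_iff_dist_tendsto_zero]
    have hbound : ∀ k, dist (y (ψ (σ k))) p ≤ 1 / (ψ (σ k) + 1 : ℝ) + dist (z (ψ (σ k))) p :=
      fun k => (dist_triangle _ (z (ψ (σ k))) _).trans
        (by gcongr; exact (hzd _).le)
    have h1 : Tendsto (fun k => 1 / (ψ (σ k) + 1 : ℝ) + dist (z (ψ (σ k))) p) atTop (𝓝 (0 + 0)) := by
      apply Tendsto.add
      · exact h10.comp ((hψmono.comp hσ).tendsto_atTop)
      · exact (tendsto_iff_dist_tendsto_zero.1 hσt)
    rw [add_zero] at h1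
    exact squeeze_zero (fun k => dist_nonneg) hbound h1
  · push_neg at hb
    have hfin : ∀ j, {m | φ m = j}.Finite := fun j => hb j
    have hφtop : Tendsto φ atTop atTop := by
      rw [Filter.tendsto_atTop]
      intro b
      have : {m | φ m < b}.Finite := by
        have hsub : {m | φ m < b} ⊆ ⋃ j ∈ Finset.range b, {m | φ m = j} := by
          intro m hm; exact Set.mem_biUnion (Finset.mem_range.2 hm) rfl
        exact (Set.Finite.biUnion (Finset.range b).finite_toSet (fun j _ => hfin j)).subset hsub
      have := Set.Finite.eventually_cofinite_notMem this
      rw [Nat.cofinite_eq_atTop] at this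
      filter_upwards [this] with m hm
      simpa using hm
    have hzK : Tendsto (fun m => Metric.infDist (z m) K) atTop (𝓝 0) := by
      refine squeeze_zero (fun m => Metric.infDist_nonneg) (fun m => ?_) (h10.comp hφtop)
      exact hd (φ m) _ (hφ m)
    have hw : ∀ m, ∃ wm ∈ K, dist (z m) wm < Metric.infDist (z m) K + 1 / (m + 1 : ℝ) :=
      fun m => (Metric.infDist_lt_iff hK).1 (lt_add_of_pos_right _ (by positivity))
    choose w hwK hwd using hw
    obtain ⟨p, hpK, σ, hσ, hσt⟩ := hKc.isSeqCompact hwK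
    refine ⟨p, subset_closure (Set.mem_iUnion.2 ⟨0, hKL hpK⟩), σ, hσ, ?_⟩
    rw [tendsto_iff_dist_tendsto_zero]
    have hbound : ∀ k, dist (y (σ k)) p ≤
        1 / (σ k + 1 : ℝ) + (Metric.infDist (z (σ k)) K + 1 / (σ k + 1 : ℝ)) + dist (w (σ k)) p := by
      intro k
      calc dist (y (σ k)) p ≤ dist (y (σ k)) (z (σ k)) + dist (z (σ k)) (w (σ k)) + dist (w (σ k)) p :=
            dist_triangle4 _ _ _ _
        _ ≤ _ := by gcongr <;> [exact (hzd _).le; exact (hwd _).le]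
    have h1 : Tendsto (fun k => 1 / (σ k + 1 : ℝ) + (Metric.infDist (z (σ k)) K + 1 / (σ k + 1 : ℝ))
        + dist (w (σ k)) p) atTop (𝓝 (0 + (0 + 0) + 0)) := by
      have hσtop := hσ.tendsto_atTop
      exact ((h10.comp hσtop).add ((hzK.comp hσtop).add (h10.comp hσtop))).add
        (tendsto_iff_dist_tendsto_zero.1 hσt)
    simp only [add_zero, zero_add] at h1
    exact squeeze_zero (fun k => dist_nonneg) hbound h1

/-- The regularization `A_K = ⋂_{n≥1} ⋃ {F_L : K ⊆ L ⊆ U_n(K), L compact}` of a monotone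
family of compact sets has compact values. -/
theorem regularization_isCompact (M X : Type*) [MetricSpace M] [MetricSpace X]
    (F : Set M → Set X)
    (hFcomp : ∀ K : Set M, IsCompact K → IsCompact (F K))
    (hFmono : ∀ K L : Set M, IsCompact K → IsCompact L → K ⊆ L → F K ⊆ F L)
    (A : Set M → Set X)
    (hA0 : A ∅ = F ∅)
    (hA : ∀ K : Set M, K.Nonempty → A K =
      ⋂ n ∈ {n : ℕ | 1 ≤ n}, ⋃ L ∈ {L : Set M | IsCompact L ∧ K ⊆ L ∧
        ∀ t ∈ L, Metric.infDist t K < 1 / (n : ℝ)}, F L) :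
    ∀ K : Set M, IsCompact K → IsCompact (A K) := by
  intro K hKc
  rcases K.eq_empty_or_nonempty with rfl | hK
  · rw [hA0]; exact hFcomp ∅ isCompact_empty
  · apply IsSeqCompact.isCompact
    intro x hx
    -- choose witnessing compact sets
    have hx' : ∀ m : ℕ, ∃ L : Set M, (IsCompact L ∧ K ⊆ L ∧
        ∀ t ∈ L, Metric.infDist t K < 1 / (m + 1 : ℝ)) ∧ x m ∈ F L := by
      intro m
      have h1 := hx m
      rw [hA K hK] at h1
      have h2 := Set.mem_iInter₂.1 h1 (m + 1) (Nat.succ_le_succ (Nat.zero_le m))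
      obtain ⟨L, hL, hxL⟩ := Set.mem_iUnion₂.1 h2
      refine ⟨L, ?_, hxL⟩
      simpa [Nat.cast_add, Nat.cast_one] using hL
    choose L hL hxF using hx'
    have hLc : ∀ m, IsCompact (L m) := fun m => (hL m).1
    have hKL : ∀ m, K ⊆ L m := fun m => (hL m).2.1
    have hLd : ∀ m, ∀ t ∈ L m, Metric.infDist t K < 1 / (m + 1 : ℝ) := fun m => (hL m).2.2
    -- compact tail closures
    set D : ℕ → Set M := fun n => closure (⋃ j, L (j + n)) with hD
    have hDc : ∀ n, IsCompact (D n) := by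
      intro n
      refine regularization_aux hK hKc (fun j => L (j + n)) (fun j => hLc _) (hKL _) ?_
      intro j t ht
      refine (hLd (j + n) t ht).le.trans ?_
      apply one_div_le_one_div_of_le (by positivity)
      push_cast; linarith
    have hKD : ∀ n, K ⊆ D n := fun n =>
      (hKL (0 + n)).trans ((Set.subset_iUnion (fun j => L (j + n)) 0).trans subset_closure)
    have hLD : ∀ n j, n ≤ j → L j ⊆ D n := by
      intro n j hnj
      have : L j = L ((j - n) + n) := by rw [Nat.sub_add_cancel hnj]
      rw [this]
      exact (Set.subset_iUnion (fun j => L (j + n)) (j - n)).trans subset_closure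
    -- extract convergent subsequence in F (D 0)
    have hxD0 : ∀ m, x m ∈ F (D 0) := fun m =>
      hFmono (L m) (D 0) (hLc m) (hDc 0) (hLD 0 m (Nat.zero_le m)) (hxF m)
    obtain ⟨p, _, σ, hσ, hσt⟩ := ((hFcomp _ (hDc 0)).isSeqCompact hxD0)
    refine ⟨p, ?_, σ, hσ, hσt⟩
    -- p ∈ A K
    rw [hA K hK]
    refine Set.mem_iInter₂.2 fun n hn => ?_
    refine Set.mem_iUnion₂.2 ⟨D n, ⟨hDc n, hKD n, ?_⟩, ?_⟩
    · -- all points of D n within 1/n of K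
      intro t ht
      have hclosed : IsClosed {t : M | Metric.infDist t K ≤ 1 / (n + 1 : ℝ)} :=
        isClosed_le (Metric.continuous_infDist_pt K) continuous_const
      have hsub : (⋃ j, L (j + n)) ⊆ {t : M | Metric.infDist t K ≤ 1 / (n + 1 : ℝ)} := by
        rintro t ht
        obtain ⟨j, hj⟩ := Set.mem_iUnion.1 ht
        refine le_trans (hLd (j + n) t hj).le ?_
        apply one_div_le_one_div_of_le (by positivity)
        push_cast; linarith
      have := closure_minimal hsub hclosed ht
      have hn' : (1 : ℝ) ≤ n := by exact_mod_cast hn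
      calc Metric.infDist t K ≤ 1 / (n + 1 : ℝ) := this
        _ < 1 / (n : ℝ) := by
            apply one_div_lt_one_div_of_lt (by linarith) (by linarith)
    · -- p ∈ F (D n)
      refine (hFcomp _ (hDc n)).isClosed.mem_of_tendsto hσt ?_
      filter_upwards [Filter.eventually_ge_atTop n] with k hk
      exact hFmono (L (σ k)) (D n) (hLc _) (hDc n) (hLD n (σ k) (hk.trans (hσ.le_apply)))
        (hxF (σ k))
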